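/- For |q|<1 and complex x, ∑_{j,k,ℓ≥0} (x;q²)_k x^{j+ℓ} (−1)^{j+k} q^{(j+k+ℓ)(j+k+ℓ−1)+ℓ²+j+k+2ℓ} / ((q;q)_j (q²;q²)_k (q²;q²)_ℓ) = (q;q²)_∞ (q²x;q²)_∞. -/

import Mathlib

open scoped BigOperators
open Finset

noncomputable def qp (a q : ℂ) (n : ℕ) : ℂ := ∏ i ∈ Finset.range n, (1 - a * q ^ i)

noncomputable def qpInf (a q : ℂ) : ℂ := ∏' i : ℕ, (1 - a * q ^ i)

lemma qp_zero (a q : ℂ) : qp a q 0 = 1 := by simp [qp]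

lemma qp_succ (a q : ℂ) (n : ℕ) : qp a q (n+1) = qp a q n * (1 - a * q ^ n) := by
  simp [qp, Finset.prod_range_succ]

lemma one_sub_ne_zero_of_norm_lt_one {z : ℂ} (h : ‖z‖ < 1) : (1 : ℂ) - z ≠ 0 := by
  intro hc
  have : (1:ℂ) = z := by linear_combination hc
  rw [← this] at h; simp at h

lemma le_norm_qp {c d : ℂ} {r : ℝ} (hr : r < 1) (h : ∀ i : ℕ, ‖c * d ^ i‖ ≤ r) (n : ℕ) :
    (1 - r) ^ n ≤ ‖qp c d n‖ := by
  have h0 : (0:ℝ) ≤ 1 - r := by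
    have := (norm_nonneg (c * d ^ 0)).trans (h 0); linarith
  rw [qp, norm_prod]
  calc (1 - r)^n = ∏ _i ∈ Finset.range n, (1 - r) := by rw [Finset.prod_const, Finset.card_range]
    _ ≤ ∏ i ∈ Finset.range n, ‖1 - c * d ^ i‖ := by
        apply Finset.prod_le_prod (fun _ _ => h0)
        intro i _
        have := norm_sub_norm_le (1 : ℂ) (c * d ^ i)
        simp only [norm_one] at this
        linarith [h i]

lemma qp_ne_zero {c d : ℂ} {r : ℝ} (hr : r < 1) (h : ∀ i : ℕ, ‖c * d ^ i‖ ≤ r) (n : ℕ) :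
    qp c d n ≠ 0 := by
  have h0 : (0:ℝ) < 1 - r := by
    have h1 := (norm_nonneg (c * d ^ 0)).trans (h 0); linarith
  intro hc
  have := le_norm_qp hr h n
  rw [hc, norm_zero] at this
  exact absurd this (not_le.mpr (pow_pos h0 n))

lemma norm_qp_le {c d : ℂ} {M : ℝ} (h : ∀ i : ℕ, ‖c * d ^ i‖ ≤ M) (n : ℕ) :
    ‖qp c d n‖ ≤ (1 + M) ^ n := by
  rw [qp, norm_prod]
  calc ∏ i ∈ Finset.range n, ‖1 - c * d ^ i‖ ≤ ∏ _i ∈ Finset.range n, (1 + M) := by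
        apply Finset.prod_le_prod (fun _ _ => norm_nonneg _)
        intro i _
        calc ‖1 - c * d ^ i‖ ≤ ‖(1:ℂ)‖ + ‖c * d ^ i‖ := norm_sub_le _ _
          _ ≤ 1 + M := by simp only [norm_one]; linarith [h i]
    _ = (1 + M)^n := by rw [Finset.prod_const, Finset.card_range]

/-- master decay lemma -/
lemma decay {B r : ℝ} (hB : 0 ≤ B) (hr0 : 0 ≤ r) (hr : r < 1) :
    ∃ C : ℝ, 0 < C ∧ ∀ n e : ℕ, n * (n - 1) ≤ e → B ^ n * r ^ e ≤ C * (2⁻¹ : ℝ) ^ n := by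
  have htend : Filter.Tendsto (fun k : ℕ => B * r ^ k) Filter.atTop (nhds 0) := by
    have := (tendsto_pow_atTop_nhds_zero_of_lt_one hr0 hr).const_mul B
    simpa using this
  obtain ⟨N, hN⟩ := Filter.eventually_atTop.mp
    (htend.eventually_le_const (by norm_num : (0:ℝ) < 2⁻¹))
  refine ⟨(max 1 (B ^ N)) * 2 ^ N, by positivity, ?_⟩
  intro n e he
  have hr1 : r ^ e ≤ r ^ (n * (n-1)) := pow_le_pow_of_le_one hr0 hr.le he
  have key : B ^ n * r ^ e ≤ B ^ n * r ^ (n*(n-1)) :=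
    mul_le_mul_of_nonneg_left hr1 (pow_nonneg hB n)
  rcases le_or_gt n N with hn | hn
  · have h2 : B ^ n ≤ max 1 (B ^ N) := by
      rcases le_or_gt B 1 with hB1 | hB1
      · exact le_max_of_le_left (pow_le_one₀ hB hB1)
      · exact le_max_of_le_right (pow_le_pow_right₀ hB1.le hn)
    have h3 : r ^ e ≤ 1 := pow_le_one₀ hr0 hr.le
    have h4 : (1:ℝ) ≤ 2 ^ N * (2⁻¹:ℝ) ^ n := by
      rw [inv_pow, ← div_eq_mul_inv, le_div_iff₀ (by positivity), one_mul]
      exact pow_le_pow_right₀ (by norm_num) hn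
    have h5 : B ^ n * r ^ e ≤ max 1 (B ^ N) :=
      le_trans (mul_le_mul_of_nonneg_left h3 (pow_nonneg hB n)) (by simpa using h2)
    calc B ^ n * r ^ e ≤ max 1 (B ^ N) := h5
      _ = (max 1 (B ^ N)) * 1 := (mul_one _).symm
      _ ≤ (max 1 (B ^ N)) * (2 ^ N * (2⁻¹:ℝ) ^ n) :=
          mul_le_mul_of_nonneg_left h4 (le_trans zero_le_one (le_max_left _ _))
      _ = (max 1 (B ^ N)) * 2 ^ N * (2⁻¹:ℝ) ^ n := by ring
  · have h1 : B * r ^ (n-1) ≤ 2⁻¹ := by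
      calc B * r ^ (n-1) ≤ B * r ^ N :=
            mul_le_mul_of_nonneg_left (pow_le_pow_of_le_one hr0 hr.le (by omega)) hB
        _ ≤ 2⁻¹ := hN N le_rfl
    have h6 : (1:ℝ) ≤ (max 1 (B ^ N)) * 2 ^ N := by
      calc (1:ℝ) = 1 * 1 := by ring
        _ ≤ (max 1 (B ^ N)) * 2 ^ N := by
            apply mul_le_mul (le_max_left _ _) (one_le_pow₀ (by norm_num)) zero_le_one
            exact le_trans zero_le_one (le_max_left _ _)
    calc B ^ n * r ^ e ≤ B ^ n * r ^ (n*(n-1)) := key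
      _ = (B * r ^ (n-1)) ^ n := by rw [mul_pow, ← pow_mul, Nat.mul_comm]
      _ ≤ (2⁻¹:ℝ) ^ n := pow_le_pow_left₀ (by positivity) h1 n
      _ = 1 * (2⁻¹:ℝ) ^ n := (one_mul _).symm
      _ ≤ (max 1 (B ^ N)) * 2 ^ N * (2⁻¹:ℝ) ^ n :=
          mul_le_mul_of_nonneg_right h6 (by positivity)

/-- summability helper on ℕ × ℕ -/
lemma summable_of_bound2 {f : ℕ × ℕ → ℂ} {C : ℝ}
    (h : ∀ p : ℕ × ℕ, ‖f p‖ ≤ C * (2⁻¹:ℝ) ^ (p.1 + p.2)) : Summable f := by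
  have hg1 : Summable (fun n : ℕ => (2⁻¹:ℝ) ^ n) :=
    summable_geometric_of_lt_one (by norm_num) (by norm_num)
  have hg2 : Summable (fun p : ℕ × ℕ => (2⁻¹:ℝ) ^ p.1 * (2⁻¹:ℝ) ^ p.2) :=
    hg1.mul_of_nonneg hg1 (fun n => by positivity) (fun n => by positivity)
  apply Summable.of_norm_bounded (hg2.mul_left C)
  intro p
  calc ‖f p‖ ≤ C * (2⁻¹:ℝ) ^ (p.1 + p.2) := h p
    _ = C * ((2⁻¹:ℝ) ^ p.1 * (2⁻¹:ℝ) ^ p.2) := by rw [pow_add]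

lemma summable_of_bound3 {f : ℕ × ℕ × ℕ → ℂ} {C : ℝ}
    (h : ∀ p : ℕ × ℕ × ℕ, ‖f p‖ ≤ C * (2⁻¹:ℝ) ^ (p.1 + p.2.1 + p.2.2)) : Summable f := by
  have hg1 : Summable (fun n : ℕ => (2⁻¹:ℝ) ^ n) :=
    summable_geometric_of_lt_one (by norm_num) (by norm_num)
  have hg2 : Summable (fun p : ℕ × ℕ => (2⁻¹:ℝ) ^ p.1 * (2⁻¹:ℝ) ^ p.2) :=
    hg1.mul_of_nonneg hg1 (fun n => by positivity) (fun n => by positivity)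
  have hg3 : Summable (fun p : ℕ × (ℕ × ℕ) => (2⁻¹:ℝ) ^ p.1 * ((2⁻¹:ℝ) ^ p.2.1 * (2⁻¹:ℝ) ^ p.2.2)) :=
    hg1.mul_of_nonneg hg2 (fun n => by positivity) (fun p => by positivity)
  apply Summable.of_norm_bounded (hg3.mul_left C)
  intro p
  calc ‖f p‖ ≤ C * (2⁻¹:ℝ) ^ (p.1 + p.2.1 + p.2.2) := h p
    _ = C * ((2⁻¹:ℝ) ^ p.1 * ((2⁻¹:ℝ) ^ p.2.1 * (2⁻¹:ℝ) ^ p.2.2)) := by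
        rw [pow_add, pow_add]; ring

/-- antidiagonal grouping of a double sum -/
lemma tsum_antidiagonal {f : ℕ × ℕ → ℂ} (hf : Summable f) :
    ∑' p : ℕ × ℕ, f p = ∑' m : ℕ, ∑ r ∈ Finset.HasAntidiagonal.antidiagonal m, f r := by
  have h1 : Summable (f ∘ Finset.HasAntidiagonal.sigmaAntidiagonalEquivProd) :=
    Finset.HasAntidiagonal.sigmaAntidiagonalEquivProd.summable_iff.mpr hf
  calc ∑' p : ℕ × ℕ, f p
      = ∑' c : (Σ n : ℕ, {x // x ∈ Finset.HasAntidiagonal.antidiagonal n}),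
          (f ∘ Finset.HasAntidiagonal.sigmaAntidiagonalEquivProd) c :=
        (Finset.HasAntidiagonal.sigmaAntidiagonalEquivProd.tsum_eq f).symm
    _ = ∑' (m : ℕ) (r : {x // x ∈ Finset.HasAntidiagonal.antidiagonal m}),
          (f ∘ Finset.HasAntidiagonal.sigmaAntidiagonalEquivProd) ⟨m, r⟩ :=
        Summable.tsum_sigma' (fun b => (hasSum_fintype _).summable) h1
    _ = ∑' m : ℕ, ∑ r ∈ Finset.HasAntidiagonal.antidiagonal m, f r := by
        apply tsum_congr
        intro m
        rw [← Finset.tsum_subtype]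
        rfl
-- continuation: finite identities
section Finite

variable {q x : ℂ}

lemma norm_pow_lt_one {q : ℂ} (hq : ‖q‖ < 1) (n : ℕ) : ‖q ^ (n+1)‖ < 1 := by
  rw [norm_pow]
  exact pow_lt_one₀ (norm_nonneg q) hq (by omega)

lemma qpqq_ne (hq : ‖q‖ < 1) (n : ℕ) : qp q q n ≠ 0 := by
  apply qp_ne_zero hq
  intro i
  rw [norm_mul, norm_pow]
  calc ‖q‖ * ‖q‖ ^ i ≤ ‖q‖ * 1 :=
        mul_le_mul_of_nonneg_left (pow_le_one₀ (norm_nonneg q) hq.le) (norm_nonneg q)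
    _ = ‖q‖ := mul_one _

lemma qpQQ_ne (hq : ‖q‖ < 1) (n : ℕ) : qp (q^2) (q^2) n ≠ 0 := by
  have hQ : ‖q‖^2 < 1 := pow_lt_one₀ (norm_nonneg q) hq (by omega)
  apply qp_ne_zero hQ
  intro i
  rw [show q^2 * (q^2)^i = (q^2)^(i+1) from (pow_succ' _ _).symm, norm_pow, norm_pow]
  calc (‖q‖^2)^(i+1) ≤ (‖q‖^2)^1 :=
        pow_le_pow_of_le_one (by positivity) hQ.le (by omega)
    _ = ‖q‖^2 := pow_one _

lemma one_sub_q_pow_ne (hq : ‖q‖ < 1) (n : ℕ) : (1:ℂ) - q^(n+1) ≠ 0 :=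
  one_sub_ne_zero_of_norm_lt_one (norm_pow_lt_one hq n)

lemma one_add_q_pow_ne (hq : ‖q‖ < 1) (n : ℕ) : (1:ℂ) + q^(n+1) ≠ 0 := by
  have := one_sub_ne_zero_of_norm_lt_one (z := -(q^(n+1))) (by rw [norm_neg]; exact norm_pow_lt_one hq n)
  simpa [sub_neg_eq_add] using this

lemma one_sub_Q_pow_ne (hq : ‖q‖ < 1) (n : ℕ) : (1:ℂ) - (q^2)^(n+1) ≠ 0 := by
  apply one_sub_ne_zero_of_norm_lt_one
  rw [norm_pow, norm_pow]
  exact pow_lt_one₀ (by positivity) (pow_lt_one₀ (norm_nonneg q) hq (by omega)) (by omega)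

/-- `w` sequence: inverse of the base-q² Pochhammer -/
noncomputable def wB (q : ℂ) (n : ℕ) : ℂ := (qp (q^2) (q^2) n)⁻¹

/-- shift: `sh g 0 = 0`, `sh g (n+1) = g n` -/
noncomputable def sh (g : ℕ → ℂ) : ℕ → ℂ := fun n => match n with
  | 0 => 0
  | (m+1) => g m

@[simp] lemma sh_zero (g : ℕ → ℂ) : sh g 0 = 0 := rfl
@[simp] lemma sh_succ (g : ℕ → ℂ) (n : ℕ) : sh g (n+1) = g n := rfl

@[simp] lemma wB_zero (q : ℂ) : wB q 0 = 1 := by simp [wB, qp_zero]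

lemma wB_ne (hq : ‖q‖ < 1) (n : ℕ) : wB q n ≠ 0 := inv_ne_zero (qpQQ_ne hq n)

lemma wB_rec (hq : ‖q‖ < 1) (n : ℕ) : wB q n = (1 - (q^2)^(n+1)) * wB q (n+1) := by
  rw [wB, wB, qp_succ]
  have h1 := qpQQ_ne hq n
  have h2 : (1:ℂ) - q^2 * (q^2)^n ≠ 0 := by
    have := one_sub_Q_pow_ne hq n
    rwa [pow_succ, mul_comm ((q^2)^n) (q^2)] at this
  field_simp
  ring

lemma w_step (hq : ‖q‖ < 1) (n : ℕ) : (q^2)^n * wB q n = wB q n - sh (wB q) n := by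
  cases n with
  | zero => simp
  | succ m =>
    rw [sh_succ, wB_rec hq m]
    ring

/-- antidiagonal shift lemmas -/
lemma sum_ad_succ (f : ℕ → ℕ → ℂ) (n : ℕ) :
    ∑ p ∈ Finset.HasAntidiagonal.antidiagonal (n+1), f p.1 p.2
      = f 0 (n+1) + ∑ p ∈ Finset.HasAntidiagonal.antidiagonal n, f (p.1+1) p.2 := by
  rw [Finset.Nat.antidiagonal_succ, Finset.sum_cons, Finset.sum_map]
  rfl

lemma sum_ad_succ' (f : ℕ → ℕ → ℂ) (n : ℕ) :
    ∑ p ∈ Finset.HasAntidiagonal.antidiagonal (n+1), f p.1 p.2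
      = f (n+1) 0 + ∑ p ∈ Finset.HasAntidiagonal.antidiagonal n, f p.1 (p.2+1) := by
  rw [Finset.Nat.antidiagonal_succ', Finset.sum_cons, Finset.sum_map]
  rfl

/-- the `u` sequence of identity (J) -/
noncomputable def uJ (q : ℂ) (c : ℕ) : ℂ :=
  ∑ p ∈ Finset.HasAntidiagonal.antidiagonal c, q ^ p.1 * wB q p.1 * wB q p.2

lemma uJ_zero (q : ℂ) : uJ q 0 = 1 := by simp [uJ]

lemma uJ_rec (hq : ‖q‖ < 1) (c : ℕ) :
    (q^2)^(c+2) * uJ q (c+2)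
      = uJ q (c+2) - q * uJ q (c+1) - uJ q (c+1) + q * uJ q c := by
  have hterm : ∀ a b : ℕ, (q^2)^(a+b) * (q ^ a * wB q a * wB q b)
      = q ^ a * wB q a * wB q b - q ^ a * sh (wB q) a * wB q b
        - q ^ a * wB q a * sh (wB q) b + q ^ a * sh (wB q) a * sh (wB q) b := by
    intro a b
    have h1 := w_step hq a
    have h2 := w_step hq b
    calc (q^2)^(a+b) * (q ^ a * wB q a * wB q b)
        = q ^ a * (((q^2)^a * wB q a) * ((q^2)^b * wB q b)) := by rw [pow_add]; ring
      _ = q ^ a * ((wB q a - sh (wB q) a) * (wB q b - sh (wB q) b)) := by rw [h1, h2]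
      _ = _ := by ring
  have e1 : ∑ p ∈ Finset.HasAntidiagonal.antidiagonal (c+2), q ^ p.1 * wB q p.1 * wB q p.2
      = uJ q (c+2) := rfl
  have e2 : ∑ p ∈ Finset.HasAntidiagonal.antidiagonal (c+2), q ^ p.1 * sh (wB q) p.1 * wB q p.2
      = q * uJ q (c+1) := by
    rw [sum_ad_succ (fun a b => q ^ a * sh (wB q) a * wB q b)]
    simp only [sh_zero, sh_succ, mul_zero, zero_mul, pow_zero, zero_add]
    rw [uJ, Finset.mul_sum]
    exact Finset.sum_congr rfl (fun p _ => by rw [pow_succ]; ring)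
  have e3 : ∑ p ∈ Finset.HasAntidiagonal.antidiagonal (c+2), q ^ p.1 * wB q p.1 * sh (wB q) p.2
      = uJ q (c+1) := by
    rw [sum_ad_succ' (fun a b => q ^ a * wB q a * sh (wB q) b)]
    simp only [sh_zero, sh_succ, mul_zero, zero_add]
    rfl
  have e4 : ∑ p ∈ Finset.HasAntidiagonal.antidiagonal (c+2), q ^ p.1 * sh (wB q) p.1 * sh (wB q) p.2
      = q * uJ q c := by
    rw [sum_ad_succ (fun a b => q ^ a * sh (wB q) a * sh (wB q) b)]
    simp only [sh_zero, sh_succ, mul_zero, zero_mul, pow_zero, zero_add]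
    rw [sum_ad_succ' (fun a b => q ^ (a+1) * wB q a * sh (wB q) b)]
    simp only [sh_zero, sh_succ, mul_zero, zero_add]
    rw [uJ, Finset.mul_sum]
    exact Finset.sum_congr rfl (fun p _ => by rw [pow_succ]; ring)
  calc (q^2)^(c+2) * uJ q (c+2)
      = ∑ p ∈ Finset.HasAntidiagonal.antidiagonal (c+2),
          (q^2)^(p.1+p.2) * (q ^ p.1 * wB q p.1 * wB q p.2) := by
        rw [uJ, Finset.mul_sum]
        exact Finset.sum_congr rfl (fun p hp => by rw [Finset.HasAntidiagonal.mem_antidiagonal.mp hp])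
    _ = (∑ p ∈ Finset.HasAntidiagonal.antidiagonal (c+2), q ^ p.1 * wB q p.1 * wB q p.2)
        - (∑ p ∈ Finset.HasAntidiagonal.antidiagonal (c+2), q ^ p.1 * sh (wB q) p.1 * wB q p.2)
        - (∑ p ∈ Finset.HasAntidiagonal.antidiagonal (c+2), q ^ p.1 * wB q p.1 * sh (wB q) p.2)
        + (∑ p ∈ Finset.HasAntidiagonal.antidiagonal (c+2), q ^ p.1 * sh (wB q) p.1 * sh (wB q) p.2) := by
        rw [← Finset.sum_sub_distrib, ← Finset.sum_sub_distrib, ← Finset.sum_add_distrib]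
        exact Finset.sum_congr rfl (fun p _ => hterm p.1 p.2)
    _ = uJ q (c+2) - q * uJ q (c+1) - uJ q (c+1) + q * uJ q c := by
        rw [e1, e2, e3, e4]

end Finite
section FiniteJ

variable {q x : ℂ}

lemma uJ_one (q : ℂ) : uJ q 1 = (1 + q) * wB q 1 := by
  rw [uJ, sum_ad_succ (fun a b => q ^ a * wB q a * wB q b)]
  simp [Finset.sum_singleton]
  ring

lemma pow_two_pow_eq (q : ℂ) (n : ℕ) : (q^2)^n = q^n * q^n := by
  rw [← pow_mul, show 2*n = n + n from by omega, pow_add]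

/-- identity (J) -/
lemma uJ_eq (hq : ‖q‖ < 1) : ∀ c, uJ q c = (qp q q c)⁻¹ := by
  have key : ∀ c, uJ q c = (qp q q c)⁻¹ ∧ uJ q (c+1) = (qp q q (c+1))⁻¹ := by
    intro c
    induction c with
    | zero =>
      constructor
      · simp [uJ_zero, qp_zero]
      · rw [uJ_one, qp_succ, qp_zero, one_mul, pow_zero, mul_one, wB, qp_succ, qp_zero,
          one_mul, pow_zero, mul_one]
        have h1 : (1:ℂ) - q ≠ 0 := by
          have := one_sub_q_pow_ne hq 0; rwa [pow_one] at this
        have h2 : (1:ℂ) - q^2 ≠ 0 := by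
          have := one_sub_Q_pow_ne hq 0; rwa [pow_one] at this
        field_simp
        ring
    | succ c ih =>
      refine ⟨ih.2, ?_⟩
      have h := uJ_rec hq c
      rw [ih.1, ih.2] at h
      have hz1 : (1:ℂ) - (q^2)^(c+2) ≠ 0 := one_sub_Q_pow_ne hq (c+1)
      have h2 : uJ q (c+2) * (1 - (q^2)^(c+2))
          = (1+q) * (qp q q (c+1))⁻¹ - q * (qp q q c)⁻¹ := by linear_combination -h
      have hsolve : uJ q (c+2)
          = ((1+q) * (qp q q (c+1))⁻¹ - q * (qp q q c)⁻¹) * (1 - (q^2)^(c+2))⁻¹ := by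
        field_simp at h2 ⊢
        linear_combination h2
      rw [hsolve]
      have e1 : qp q q (c+1) = qp q q c * (1 - q^(c+1)) := by
        rw [qp_succ, ← pow_succ']
      have e2 : qp q q (c+2) = qp q q c * (1 - q^(c+1)) * (1 - q^(c+2)) := by
        rw [qp_succ, qp_succ, ← pow_succ', ← pow_succ']
      have e3 : (q^2)^(c+2) = q^(c+2) * q^(c+2) := pow_two_pow_eq q (c+2)
      have e4 : q^(c+2) = q^(c+1) * q := pow_succ q (c+1)
      have n0 : qp q q c ≠ 0 := qpqq_ne hq c
      have n1 : (1:ℂ) - q^(c+1) ≠ 0 := one_sub_q_pow_ne hq c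
      have n2 : (1:ℂ) - q^(c+2) ≠ 0 := one_sub_q_pow_ne hq (c+1)
      rw [e1, e2, e3, e4] at *
      have n3 : (1:ℂ) - q^(c+1)*q*(q^(c+1)*q) ≠ 0 := by
        rw [show q^(c+1)*q*(q^(c+1)*q) = (q^(c+2))^2 from by rw [e4]; ring]
        have : ‖(q^(c+2))^2‖ < 1 := by
          rw [norm_pow]
          exact pow_lt_one₀ (norm_nonneg _) (norm_pow_lt_one hq (c+1)) (by omega)
        exact one_sub_ne_zero_of_norm_lt_one this
      field_simp
      rw [div_eq_div_iff (by convert n3 using 1; ring) (by convert n2 using 1; ring)]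
      ring
  exact fun c => (key c).1

end FiniteJ
section FiniteK

variable {q x : ℂ}

noncomputable def PK (q x : ℂ) (k : ℕ) : ℂ := qp x (q^2) k * wB q k
noncomputable def RK (q x : ℂ) (k : ℕ) : ℂ := (q^2)^k * qp x (q^2) k * wB q k
noncomputable def AK (q x : ℂ) (c : ℕ) : ℂ :=
  ∑ p ∈ Finset.HasAntidiagonal.antidiagonal c, x ^ p.1 * PK q x p.2 * wB q p.1
noncomputable def BK (q x : ℂ) (c : ℕ) : ℂ :=
  ∑ p ∈ Finset.HasAntidiagonal.antidiagonal c, x ^ p.1 * RK q x p.2 * wB q p.1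

lemma R_step (hq : ‖q‖ < 1) (k : ℕ) :
    RK q x k = PK q x k - sh (PK q x) k + x * sh (RK q x) k := by
  cases k with
  | zero => simp [RK, PK, qp_zero]
  | succ m =>
    rw [sh_succ, sh_succ, RK, PK, RK, PK, qp_succ x (q^2) m, wB_rec hq m]
    ring

lemma K1 (hq : ‖q‖ < 1) (c : ℕ) :
    BK q x (c+1) = AK q x (c+1) - AK q x c + x * BK q x c := by
  have hsplit : BK q x (c+1)
      = AK q x (c+1)
        - (∑ p ∈ Finset.HasAntidiagonal.antidiagonal (c+1), x ^ p.1 * sh (PK q x) p.2 * wB q p.1)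
        + x * (∑ p ∈ Finset.HasAntidiagonal.antidiagonal (c+1), x ^ p.1 * sh (RK q x) p.2 * wB q p.1) := by
    rw [BK, AK, Finset.mul_sum, ← Finset.sum_sub_distrib, ← Finset.sum_add_distrib]
    exact Finset.sum_congr rfl (fun p _ => by rw [R_step hq p.2]; ring)
  have e1 : ∑ p ∈ Finset.HasAntidiagonal.antidiagonal (c+1), x ^ p.1 * sh (PK q x) p.2 * wB q p.1
      = AK q x c := by
    rw [sum_ad_succ' (fun b k => x ^ b * sh (PK q x) k * wB q b)]
    simp only [sh_zero, sh_succ, mul_zero, zero_mul, zero_add]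
    rfl
  have e2 : ∑ p ∈ Finset.HasAntidiagonal.antidiagonal (c+1), x ^ p.1 * sh (RK q x) p.2 * wB q p.1
      = BK q x c := by
    rw [sum_ad_succ' (fun b k => x ^ b * sh (RK q x) k * wB q b)]
    simp only [sh_zero, sh_succ, mul_zero, zero_mul, zero_add]
    rfl
  rw [hsplit, e1, e2]

lemma K2 (hq : ‖q‖ < 1) (c : ℕ) :
    (q^2)^(c+2) * AK q x (c+2) = AK q x (c+2) - AK q x (c+1) := by
  have hterm : ∀ b k : ℕ, (q^2)^(b+k) * (x ^ b * PK q x k * wB q b)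
      = x ^ b * PK q x k * wB q b
        - x ^ b * sh (PK q x) k * wB q b
        + x * (x ^ b * sh (RK q x) k * wB q b)
        - x ^ b * PK q x k * sh (wB q) b
        + x ^ b * sh (PK q x) k * sh (wB q) b
        - x * (x ^ b * sh (RK q x) k * sh (wB q) b) := by
    intro b k
    have hw := w_step hq b
    have hr := R_step (x := x) hq k
    have hQk : (q^2)^(b+k) * (x ^ b * PK q x k * wB q b)
        = x ^ b * ((q^2)^b * wB q b) * ((q^2)^k * PK q x k) := by
      rw [pow_add]; ring
    have hRK : (q^2)^k * PK q x k = RK q x k := by rw [RK, PK]; ring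
    rw [hQk, hRK, hw, hr]
    ring
  have hsplit : (q^2)^(c+2) * AK q x (c+2)
      = AK q x (c+2)
        - (∑ p ∈ Finset.HasAntidiagonal.antidiagonal (c+2), x ^ p.1 * sh (PK q x) p.2 * wB q p.1)
        + x * (∑ p ∈ Finset.HasAntidiagonal.antidiagonal (c+2), x ^ p.1 * sh (RK q x) p.2 * wB q p.1)
        - (∑ p ∈ Finset.HasAntidiagonal.antidiagonal (c+2), x ^ p.1 * PK q x p.2 * sh (wB q) p.1)
        + (∑ p ∈ Finset.HasAntidiagonal.antidiagonal (c+2), x ^ p.1 * sh (PK q x) p.2 * sh (wB q) p.1)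
        - x * (∑ p ∈ Finset.HasAntidiagonal.antidiagonal (c+2), x ^ p.1 * sh (RK q x) p.2 * sh (wB q) p.1) := by
    rw [AK, Finset.mul_sum, Finset.mul_sum, Finset.mul_sum,
      ← Finset.sum_sub_distrib, ← Finset.sum_add_distrib, ← Finset.sum_sub_distrib,
      ← Finset.sum_add_distrib, ← Finset.sum_sub_distrib]
    exact Finset.sum_congr rfl (fun p hp => by
      rw [← Finset.HasAntidiagonal.mem_antidiagonal.mp hp]
      exact hterm p.1 p.2)
  have e1 : ∑ p ∈ Finset.HasAntidiagonal.antidiagonal (c+2), x ^ p.1 * sh (PK q x) p.2 * wB q p.1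
      = AK q x (c+1) := by
    rw [sum_ad_succ' (fun b k => x ^ b * sh (PK q x) k * wB q b)]
    simp only [sh_zero, sh_succ, mul_zero, zero_mul, zero_add]
    rfl
  have e2 : ∑ p ∈ Finset.HasAntidiagonal.antidiagonal (c+2), x ^ p.1 * sh (RK q x) p.2 * wB q p.1
      = BK q x (c+1) := by
    rw [sum_ad_succ' (fun b k => x ^ b * sh (RK q x) k * wB q b)]
    simp only [sh_zero, sh_succ, mul_zero, zero_mul, zero_add]
    rfl
  have e3 : ∑ p ∈ Finset.HasAntidiagonal.antidiagonal (c+2), x ^ p.1 * PK q x p.2 * sh (wB q) p.1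
      = x * AK q x (c+1) := by
    rw [sum_ad_succ (fun b k => x ^ b * PK q x k * sh (wB q) b)]
    simp only [sh_zero, sh_succ, mul_zero, zero_mul, pow_zero, zero_add]
    rw [AK, Finset.mul_sum]
    exact Finset.sum_congr rfl (fun p _ => by rw [pow_succ]; ring)
  have e4 : ∑ p ∈ Finset.HasAntidiagonal.antidiagonal (c+2), x ^ p.1 * sh (PK q x) p.2 * sh (wB q) p.1
      = x * AK q x c := by
    rw [sum_ad_succ (fun b k => x ^ b * sh (PK q x) k * sh (wB q) b)]
    simp only [sh_zero, sh_succ, mul_zero, zero_mul, pow_zero, zero_add]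
    rw [sum_ad_succ' (fun b k => x ^ (b+1) * sh (PK q x) k * wB q b)]
    simp only [sh_zero, sh_succ, mul_zero, zero_mul, zero_add]
    rw [AK, Finset.mul_sum]
    exact Finset.sum_congr rfl (fun p _ => by rw [pow_succ]; ring)
  have e5 : ∑ p ∈ Finset.HasAntidiagonal.antidiagonal (c+2), x ^ p.1 * sh (RK q x) p.2 * sh (wB q) p.1
      = x * BK q x c := by
    rw [sum_ad_succ (fun b k => x ^ b * sh (RK q x) k * sh (wB q) b)]
    simp only [sh_zero, sh_succ, mul_zero, zero_mul, pow_zero, zero_add]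
    rw [sum_ad_succ' (fun b k => x ^ (b+1) * sh (RK q x) k * wB q b)]
    simp only [sh_zero, sh_succ, mul_zero, zero_mul, zero_add]
    rw [BK, Finset.mul_sum]
    exact Finset.sum_congr rfl (fun p _ => by rw [pow_succ]; ring)
  rw [hsplit, e1, e2, e3, e4, e5, K1 hq c]
  ring

/-- identity (K) -/
lemma AK_eq (hq : ‖q‖ < 1) : ∀ c, AK q x c = wB q c := by
  have base0 : AK q x 0 = wB q 0 := by simp [AK, PK, qp_zero]
  have base1 : AK q x 1 = wB q 1 := by
    rw [AK, sum_ad_succ (fun b k => x ^ b * PK q x k * wB q b)]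
    simp only [Finset.Nat.antidiagonal_zero, Finset.sum_singleton, pow_zero, pow_one]
    rw [PK, PK, qp_succ, qp_zero, wB_zero]
    simp only [pow_zero, mul_one, one_mul]
    ring
  have key : ∀ c, AK q x c = wB q c ∧ AK q x (c+1) = wB q (c+1) := by
    intro c
    induction c with
    | zero => exact ⟨base0, base1⟩
    | succ c ih =>
      refine ⟨ih.2, ?_⟩
      have h := K2 (x := x) hq c
      rw [ih.2] at h
      have hz : (1:ℂ) - (q^2)^(c+2) ≠ 0 := one_sub_Q_pow_ne hq (c+1)
      have h2 : AK q x (c+2) * (1 - (q^2)^(c+2)) = wB q (c+1) := by linear_combination -h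
      rw [wB_rec hq (c+1)] at h2
      exact mul_right_cancel₀ hz (by linear_combination h2)
  exact fun c => (key c).1

end FiniteK
section FiniteII

variable {q x : ℂ}

noncomputable def PII (q : ℂ) (p : ℕ) : ℂ :=
  ∑ r ∈ Finset.HasAntidiagonal.antidiagonal p, (-1) ^ r.2 * q ^ (r.1 ^ 2) * wB q r.1 * wB q r.2

lemma PII_zero (q : ℂ) : PII q 0 = 1 := by simp [PII]

lemma pascal_w (hq : ‖q‖ < 1) (l r : ℕ) :
    (1 - (q^2)^(l+r)) * (wB q l * wB q r)
      = wB q l * sh (wB q) r + (q^2)^r * sh (wB q) l * wB q r := by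
  linear_combination (-(q^2)^r * wB q r) * (w_step hq l) + (-(wB q l)) * (w_step hq r)

lemma PII_rec (hq : ‖q‖ < 1) (p : ℕ) :
    (1 - (q^2)^(p+1)) * PII q (p+1) = (q^(2*p+1) - 1) * PII q p := by
  have hsplit : (1 - (q^2)^(p+1)) * PII q (p+1)
      = (∑ r ∈ Finset.HasAntidiagonal.antidiagonal (p+1), (-1) ^ r.2 * q ^ (r.1 ^ 2) * (wB q r.1 * sh (wB q) r.2))
        + (∑ r ∈ Finset.HasAntidiagonal.antidiagonal (p+1),
            (-1) ^ r.2 * q ^ (r.1 ^ 2) * ((q^2)^r.2 * sh (wB q) r.1 * wB q r.2)) := by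
    rw [PII, Finset.mul_sum, ← Finset.sum_add_distrib]
    refine Finset.sum_congr rfl (fun r hr => ?_)
    have hm := Finset.HasAntidiagonal.mem_antidiagonal.mp hr
    calc (1 - (q^2)^(p+1)) * ((-1) ^ r.2 * q ^ (r.1 ^ 2) * wB q r.1 * wB q r.2)
        = (-1) ^ r.2 * q ^ (r.1 ^ 2) * ((1 - (q^2)^(r.1+r.2)) * (wB q r.1 * wB q r.2)) := by
          rw [hm]; ring
      _ = _ := by rw [pascal_w hq r.1 r.2]; ring
  have e1 : ∑ r ∈ Finset.HasAntidiagonal.antidiagonal (p+1), (-1) ^ r.2 * q ^ (r.1 ^ 2) * (wB q r.1 * sh (wB q) r.2)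
      = - PII q p := by
    rw [sum_ad_succ' (fun l r => (-1) ^ r * q ^ (l ^ 2) * (wB q l * sh (wB q) r))]
    simp only [sh_zero, sh_succ, mul_zero, zero_add]
    calc ∑ r ∈ Finset.HasAntidiagonal.antidiagonal p, (-1) ^ (r.2+1) * q ^ (r.1 ^ 2) * (wB q r.1 * wB q r.2)
        = ∑ r ∈ Finset.HasAntidiagonal.antidiagonal p, -((-1) ^ r.2 * q ^ (r.1 ^ 2) * wB q r.1 * wB q r.2) :=
          Finset.sum_congr rfl (fun r _ => by rw [pow_succ]; ring)
      _ = - PII q p := by rw [Finset.sum_neg_distrib, PII]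
  have e2 : ∑ r ∈ Finset.HasAntidiagonal.antidiagonal (p+1),
        (-1) ^ r.2 * q ^ (r.1 ^ 2) * ((q^2)^r.2 * sh (wB q) r.1 * wB q r.2)
      = q^(2*p+1) * PII q p := by
    rw [sum_ad_succ (fun l r => (-1) ^ r * q ^ (l ^ 2) * ((q^2)^r * sh (wB q) l * wB q r))]
    simp only [sh_zero, sh_succ, mul_zero, zero_mul, zero_add]
    rw [PII, Finset.mul_sum]
    refine Finset.sum_congr rfl (fun r hr => ?_)
    have hm := Finset.HasAntidiagonal.mem_antidiagonal.mp hr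
    have hexp : q ^ ((r.1+1) ^ 2) * (q^2)^r.2 = q^(2*p+1) * q ^ (r.1 ^ 2) := by
      rw [← pow_mul, ← pow_add, ← pow_add]
      congr 1
      have h1 : (r.1+1)^2 = r.1^2 + 2*r.1 + 1 := by ring
      omega
    calc (-1) ^ r.2 * q ^ ((r.1+1) ^ 2) * ((q^2)^r.2 * wB q r.1 * wB q r.2)
        = (q ^ ((r.1+1) ^ 2) * (q^2)^r.2) * ((-1) ^ r.2 * wB q r.1 * wB q r.2) := by ring
      _ = _ := by rw [hexp]; ring
  rw [hsplit, e1, e2]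
  ring

/-- identity (II) -/
lemma PII_eq (hq : ‖q‖ < 1) : ∀ p, PII q p = (-1)^p * qp q (q^2) p * wB q p := by
  intro p
  induction p with
  | zero => simp [PII_zero, qp_zero]
  | succ p ih =>
    have h := PII_rec hq p
    rw [ih] at h
    have hz : (1:ℂ) - (q^2)^(p+1) ≠ 0 := one_sub_Q_pow_ne hq p
    apply mul_left_cancel₀ hz
    rw [h, qp_succ q (q^2) p, wB_rec hq p]
    have hqq : q^(2*p+1) = q * (q^2)^p := by
      rw [pow_succ', pow_mul]
    rw [hqq]
    ring
end FiniteII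

section Iassembly

variable {q x : ℂ}

/-- triangular swap for triple antidiagonal sums -/
lemma tri_swap (f : ℕ → ℕ → ℕ → ℂ) (m : ℕ) :
    ∑ p ∈ Finset.HasAntidiagonal.antidiagonal m, ∑ u ∈ Finset.HasAntidiagonal.antidiagonal p.1, f u.1 u.2 p.2
      = ∑ p ∈ Finset.HasAntidiagonal.antidiagonal m, ∑ u ∈ Finset.HasAntidiagonal.antidiagonal p.2, f p.1 u.1 u.2 := by
  rw [Finset.sum_sigma' (Finset.HasAntidiagonal.antidiagonal m) (fun p => Finset.HasAntidiagonal.antidiagonal p.1)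
      (fun p u => f u.1 u.2 p.2),
    Finset.sum_sigma' (Finset.HasAntidiagonal.antidiagonal m) (fun p => Finset.HasAntidiagonal.antidiagonal p.2)
      (fun p u => f p.1 u.1 u.2)]
  refine Finset.sum_nbij' (fun z => ⟨(z.2.1, z.2.2 + z.1.2), (z.2.2, z.1.2)⟩)
    (fun z => ⟨(z.1.1 + z.2.1, z.2.2), (z.1.1, z.2.1)⟩) ?_ ?_ ?_ ?_ ?_
  · rintro ⟨⟨j, k⟩, ⟨a, b⟩⟩ hz
    simp only [Finset.mem_sigma, Finset.HasAntidiagonal.mem_antidiagonal, and_true, true_and,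
      eq_self_iff_true] at hz ⊢
    omega
  · rintro ⟨⟨a, c⟩, ⟨b, k⟩⟩ hz
    simp only [Finset.mem_sigma, Finset.HasAntidiagonal.mem_antidiagonal, and_true, true_and,
      eq_self_iff_true] at hz ⊢
    omega
  · rintro ⟨⟨j, k⟩, ⟨a, b⟩⟩ hz
    simp only [Finset.mem_sigma, Finset.HasAntidiagonal.mem_antidiagonal] at hz
    simp only [Sigma.mk.inj_iff, Prod.mk.injEq, heq_eq_eq, and_true, true_and,
      eq_self_iff_true]
    omega
  · rintro ⟨⟨a, c⟩, ⟨b, k⟩⟩ hz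
    simp only [Finset.mem_sigma, Finset.HasAntidiagonal.mem_antidiagonal] at hz
    simp only [Sigma.mk.inj_iff, Prod.mk.injEq, heq_eq_eq, and_true, true_and,
      eq_self_iff_true]
    omega
  · rintro ⟨⟨j, k⟩, ⟨a, b⟩⟩ _
    rfl

end Iassembly
section Assembly

variable {q x : ℂ}

/-- identity (I') -/
lemma Tm_eq (hq : ‖q‖ < 1) (x : ℂ) (m : ℕ) :
    ∑ p ∈ Finset.HasAntidiagonal.antidiagonal m, x ^ p.1 * qp x (q^2) p.2 * (qp q q p.1)⁻¹ * wB q p.2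
      = ∑ p ∈ Finset.HasAntidiagonal.antidiagonal m, x ^ p.1 * q ^ p.1 * wB q p.1 * wB q p.2 := by
  calc ∑ p ∈ Finset.HasAntidiagonal.antidiagonal m, x ^ p.1 * qp x (q^2) p.2 * (qp q q p.1)⁻¹ * wB q p.2
      = ∑ p ∈ Finset.HasAntidiagonal.antidiagonal m, ∑ u ∈ Finset.HasAntidiagonal.antidiagonal p.1,
          x ^ (u.1 + u.2) * q ^ u.1 * wB q u.1 * wB q u.2 * PK q x p.2 := by
        refine Finset.sum_congr rfl fun p _ => ?_
        rw [← uJ_eq hq p.1, uJ, Finset.mul_sum, Finset.sum_mul]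
        refine Finset.sum_congr rfl fun u hu => ?_
        rw [← Finset.HasAntidiagonal.mem_antidiagonal.mp hu, PK]
        ring
    _ = ∑ p ∈ Finset.HasAntidiagonal.antidiagonal m, ∑ u ∈ Finset.HasAntidiagonal.antidiagonal p.2,
          x ^ (p.1 + u.1) * q ^ p.1 * wB q p.1 * wB q u.1 * PK q x u.2 :=
        tri_swap (fun a b k => x ^ (a + b) * q ^ a * wB q a * wB q b * PK q x k) m
    _ = ∑ p ∈ Finset.HasAntidiagonal.antidiagonal m, x ^ p.1 * q ^ p.1 * wB q p.1 * AK q x p.2 := by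
        refine Finset.sum_congr rfl fun p _ => ?_
        rw [AK, Finset.mul_sum]
        refine Finset.sum_congr rfl fun u _ => ?_
        rw [pow_add]
        ring
    _ = _ := by
        refine Finset.sum_congr rfl fun p _ => ?_
        rw [AK_eq hq p.2]

noncomputable def Ff (q x : ℂ) (j k l : ℕ) : ℂ :=
  qp x (q^2) k * x ^ (j + l) * (-1) ^ (j + k) * q ^ ((j+k+l)^2 + l^2 + l)
    / (qp q q j * qp (q^2) (q^2) k * qp (q^2) (q^2) l)

noncomputable def Hf (q x : ℂ) (l r s : ℕ) : ℂ :=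
  (-1) ^ (r+s) * x ^ (l+r) * q ^ (2*l^2 + l + r + (r+s)^2 + 2*(r+s)*l)
    * (wB q l * wB q r * wB q s)

noncomputable def Kf (q x : ℂ) (p s : ℕ) : ℂ :=
  (-1) ^ (p+s) * x ^ p * qp q (q^2) p * q ^ (p^2 + p + 2*s*p + s^2) * (wB q p * wB q s)

/-- step 2 per (l, m) -/
lemma sumF_eq_sumH (hq : ‖q‖ < 1) (x : ℂ) (l m : ℕ) :
    ∑ p ∈ Finset.HasAntidiagonal.antidiagonal m, Ff q x p.1 p.2 l
      = ∑ p ∈ Finset.HasAntidiagonal.antidiagonal m, Hf q x l p.1 p.2 := by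
  have hL : ∑ p ∈ Finset.HasAntidiagonal.antidiagonal m, Ff q x p.1 p.2 l
      = ((-1)^m * x^l * q^((m+l)^2 + l^2 + l) * wB q l)
        * ∑ p ∈ Finset.HasAntidiagonal.antidiagonal m,
            x ^ p.1 * qp x (q^2) p.2 * (qp q q p.1)⁻¹ * wB q p.2 := by
    rw [Finset.mul_sum]
    refine Finset.sum_congr rfl fun p hp => ?_
    have hm := Finset.HasAntidiagonal.mem_antidiagonal.mp hp
    rw [Ff, div_eq_mul_inv, mul_inv, mul_inv,
      show p.1 + p.2 + l = m + l from by omega, hm, wB, wB]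
    ring
  have hR : ∑ p ∈ Finset.HasAntidiagonal.antidiagonal m, Hf q x l p.1 p.2
      = ((-1)^m * x^l * q^((m+l)^2 + l^2 + l) * wB q l)
        * ∑ p ∈ Finset.HasAntidiagonal.antidiagonal m, x ^ p.1 * q ^ p.1 * wB q p.1 * wB q p.2 := by
    rw [Finset.mul_sum]
    refine Finset.sum_congr rfl fun p hp => ?_
    have hm := Finset.HasAntidiagonal.mem_antidiagonal.mp hp
    rw [Hf, hm,
      show 2*l^2 + l + p.1 + m^2 + 2*m*l = ((m+l)^2 + l^2 + l) + p.1 from by ring,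
      pow_add, pow_add]
    ring
  rw [hL, hR, Tm_eq hq x m]

/-- step 3 per (s, p) -/
lemma sumH_eq_K (hq : ‖q‖ < 1) (x : ℂ) (s p : ℕ) :
    ∑ u ∈ Finset.HasAntidiagonal.antidiagonal p, Hf q x u.1 u.2 s = Kf q x p s := by
  have hL : ∑ u ∈ Finset.HasAntidiagonal.antidiagonal p, Hf q x u.1 u.2 s
      = ((-1)^s * x^p * q^(p^2 + p + 2*s*p + s^2) * wB q s)
        * ∑ u ∈ Finset.HasAntidiagonal.antidiagonal p, (-1) ^ u.2 * q ^ (u.1 ^ 2) * wB q u.1 * wB q u.2 := by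
    rw [Finset.mul_sum]
    refine Finset.sum_congr rfl fun u hu => ?_
    have hm := Finset.HasAntidiagonal.mem_antidiagonal.mp hu
    rw [Hf, hm,
      show 2*u.1^2 + u.1 + u.2 + (u.2+s)^2 + 2*(u.2+s)*u.1
          = (p^2 + p + 2*s*p + s^2) + u.1^2 from by rw [← hm]; ring,
      pow_add, pow_add]
    ring
  rw [hL, show (∑ u ∈ Finset.HasAntidiagonal.antidiagonal p,
      (-1) ^ u.2 * q ^ (u.1 ^ 2) * wB q u.1 * wB q u.2) = PII q p from rfl,
    PII_eq hq p, Kf, pow_add]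
  ring

end Assembly
section Euler

variable {q : ℂ}

noncomputable def eterm (q a : ℂ) (n : ℕ) : ℂ :=
  (-1)^n * a^n * q^(n*(n-1)) * wB q n

@[simp] lemma eterm_zero (q a : ℂ) : eterm q a 0 = 1 := by simp [eterm]

lemma one_sub_norm_pos (hq : ‖q‖ < 1) : (0:ℝ) < 1 - ‖q‖ := by linarith

lemma qq_factor_le (hq : ‖q‖ < 1) (i : ℕ) : ‖q * q ^ i‖ ≤ ‖q‖ := by
  rw [norm_mul, norm_pow]
  calc ‖q‖ * ‖q‖ ^ i ≤ ‖q‖ * 1 :=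
        mul_le_mul_of_nonneg_left (pow_le_one₀ (norm_nonneg q) hq.le) (norm_nonneg q)
    _ = ‖q‖ := mul_one _

lemma QQ_factor_le (hq : ‖q‖ < 1) (i : ℕ) : ‖q^2 * (q^2) ^ i‖ ≤ ‖q‖ := by
  rw [show q^2 * (q^2)^i = (q^2)^(i+1) from (pow_succ' _ _).symm, norm_pow, norm_pow]
  calc (‖q‖^2)^(i+1) ≤ ‖q‖^(1*(i+1)) := by
        rw [one_mul]
        exact pow_le_pow_left₀ (by positivity) (by
          calc ‖q‖^2 ≤ ‖q‖^1 := pow_le_pow_of_le_one (norm_nonneg q) hq.le (by omega)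
            _ = ‖q‖ := pow_one _) (i+1)
    _ ≤ ‖q‖^1 := pow_le_pow_of_le_one (norm_nonneg q) hq.le (by omega)
    _ = ‖q‖ := pow_one _

lemma norm_wB_le (hq : ‖q‖ < 1) (n : ℕ) : ‖wB q n‖ ≤ ((1 - ‖q‖)⁻¹)^n := by
  rw [wB, norm_inv, inv_pow]
  have h1 := le_norm_qp hq (QQ_factor_le hq) n
  have h2 : (0:ℝ) < (1 - ‖q‖)^n := pow_pos (one_sub_norm_pos hq) n
  exact inv_anti₀ h2 h1

lemma norm_qp_inv_le (hq : ‖q‖ < 1) (n : ℕ) : ‖(qp q q n)⁻¹‖ ≤ ((1 - ‖q‖)⁻¹)^n := by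
  rw [norm_inv, inv_pow]
  have h1 := le_norm_qp hq (qq_factor_le hq) n
  have h2 : (0:ℝ) < (1 - ‖q‖)^n := pow_pos (one_sub_norm_pos hq) n
  exact inv_anti₀ h2 h1

lemma norm_eterm_le (hq : ‖q‖ < 1) (a : ℂ) (n : ℕ) :
    ‖eterm q a n‖ ≤ (‖a‖ * (1-‖q‖)⁻¹)^n * ‖q‖^(n*(n-1)) := by
  rw [eterm, mul_pow]
  calc ‖(-1)^n * a^n * q^(n*(n-1)) * wB q n‖
      = ‖a‖^n * ‖q‖^(n*(n-1)) * ‖wB q n‖ := by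
        rw [norm_mul, norm_mul, norm_mul, norm_pow, norm_pow, norm_pow]
        simp [norm_one]
    _ ≤ ‖a‖^n * ‖q‖^(n*(n-1)) * ((1-‖q‖)⁻¹)^n := by
        exact mul_le_mul_of_nonneg_left (norm_wB_le hq n) (by positivity)
    _ = ‖a‖^n * ((1-‖q‖)⁻¹)^n * ‖q‖^(n*(n-1)) := by ring

lemma summable_eterm (hq : ‖q‖ < 1) (a : ℂ) : Summable (eterm q a) := by
  obtain ⟨C, hC, hdec⟩ := decay (B := ‖a‖ * (1-‖q‖)⁻¹)
    (mul_nonneg (norm_nonneg a) (inv_nonneg.mpr (one_sub_norm_pos hq).le)) (norm_nonneg q) hq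
  apply Summable.of_norm_bounded (g := fun n => C * (2⁻¹:ℝ)^n)
    ((summable_geometric_of_lt_one (by norm_num) (by norm_num)).mul_left C)
  intro n
  exact (norm_eterm_le hq a n).trans (hdec n (n*(n-1)) le_rfl)

lemma eterm_succ_id (hq : ‖q‖ < 1) (a : ℂ) (n : ℕ) :
    eterm q a (n+1) = eterm q (a*q^2) (n+1) - a * eterm q (a*q^2) n := by
  have hexp : q^((n+1)*n) = q^(n*(n-1)) * (q^2)^n := by
    rw [← pow_mul, ← pow_add]
    congr 1
    cases n with
    | zero => simp
    | succ m => simp only [Nat.succ_sub_one]; ring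
  rw [eterm, eterm, eterm]
  simp only [Nat.succ_sub_one]
  rw [hexp, wB_rec hq n]
  ring

lemma euler_step (hq : ‖q‖ < 1) (a : ℂ) :
    ∑' n, eterm q a n = (1 - a) * ∑' n, eterm q (a * q^2) n := by
  have s1 : Summable (eterm q a) := summable_eterm hq a
  have s2 : Summable (eterm q (a*q^2)) := summable_eterm hq _
  have s2' : Summable (fun n => eterm q (a*q^2) (n+1)) := (summable_nat_add_iff 1).2 s2
  have hshift : ∑' n, eterm q (a*q^2) (n+1) = (∑' n, eterm q (a*q^2) n) - 1 := by
    have h := Summable.tsum_eq_zero_add s2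
    rw [eterm_zero] at h
    rw [h]; ring
  calc ∑' n, eterm q a n = eterm q a 0 + ∑' n, eterm q a (n+1) := Summable.tsum_eq_zero_add s1
    _ = 1 + ∑' n, (eterm q (a*q^2) (n+1) - a * eterm q (a*q^2) n) := by
        rw [eterm_zero]
        congr 1
        exact tsum_congr (fun n => eterm_succ_id hq a n)
    _ = 1 + (∑' n, eterm q (a*q^2) (n+1) - a * ∑' n, eterm q (a*q^2) n) := by
        rw [Summable.tsum_sub s2' (s2.mul_left a), tsum_mul_left]
    _ = (1 - a) * ∑' n, eterm q (a*q^2) n := by rw [hshift]; ring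

lemma euler_iter (hq : ‖q‖ < 1) (a : ℂ) :
    ∀ N, ∑' n, eterm q a n = qp a (q^2) N * ∑' n, eterm q (a * (q^2)^N) n := by
  intro N
  induction N with
  | zero => simp [qp_zero]
  | succ N ih =>
    rw [ih, euler_step hq (a * (q^2)^N), qp_succ,
      show a * (q^2)^N * q^2 = a * (q^2)^(N+1) from by rw [pow_succ]; ring]
    ring

lemma euler_tail (hq : ‖q‖ < 1) (a b : ℂ) (hb : ‖b‖ ≤ ‖a‖) :
    ‖(∑' n, eterm q b n) - 1‖
      ≤ ‖b‖ * ∑' n, (‖a‖^n * ‖q‖^(n*(n+1)) * ((1-‖q‖)⁻¹)^(n+1)) := by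
  have hgs : Summable (fun n => ‖a‖^n * ‖q‖^(n*(n+1)) * ((1-‖q‖)⁻¹)^(n+1)) := by
    obtain ⟨C, hC, hdec⟩ := decay (B := ‖a‖ * (1-‖q‖)⁻¹)
      (mul_nonneg (norm_nonneg a) (inv_nonneg.mpr (one_sub_norm_pos hq).le)) (norm_nonneg q) hq
    apply Summable.of_norm_bounded (g := fun n => ((1-‖q‖)⁻¹ * C) * (2⁻¹:ℝ)^n)
      ((summable_geometric_of_lt_one (by norm_num) (by norm_num)).mul_left _)
    intro n
    have h1 : ‖a‖^n * ‖q‖^(n*(n+1)) * ((1-‖q‖)⁻¹)^(n+1)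
        = (1-‖q‖)⁻¹ * ((‖a‖ * (1-‖q‖)⁻¹)^n * ‖q‖^(n*(n+1))) := by
      rw [mul_pow, pow_succ]; ring
    have hinv : (0:ℝ) ≤ (1-‖q‖)⁻¹ := inv_nonneg.mpr (one_sub_norm_pos hq).le
    rw [Real.norm_of_nonneg (mul_nonneg (mul_nonneg (pow_nonneg (norm_nonneg a) n)
      (pow_nonneg (norm_nonneg q) _)) (pow_nonneg hinv _)), h1, mul_assoc]
    refine mul_le_mul_of_nonneg_left ?_ hinv
    exact hdec n (n*(n+1)) (Nat.mul_le_mul le_rfl (by omega))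
  have hsb : Summable (eterm q b) := summable_eterm hq b
  have hsb' : Summable (fun n => eterm q b (n+1)) := (summable_nat_add_iff 1).2 hsb
  have hdiff : (∑' n, eterm q b n) - 1 = ∑' n, eterm q b (n+1) := by
    have h := Summable.tsum_eq_zero_add hsb
    rw [eterm_zero] at h
    rw [h]; ring
  have hterm : ∀ n, ‖eterm q b (n+1)‖ ≤ ‖b‖ * (‖a‖^n * ‖q‖^(n*(n+1)) * ((1-‖q‖)⁻¹)^(n+1)) := by
    intro n
    have h1 := norm_eterm_le hq b (n+1)
    have h2 : (‖b‖ * (1-‖q‖)⁻¹)^(n+1) * ‖q‖^((n+1)*n)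
        ≤ ‖b‖ * (‖a‖^n * ‖q‖^(n*(n+1)) * ((1-‖q‖)⁻¹)^(n+1)) := by
      rw [mul_pow, Nat.mul_comm (n+1) n]
      have h3 : ‖b‖^(n+1) ≤ ‖b‖ * ‖a‖^n := by
        rw [pow_succ']
        exact mul_le_mul_of_nonneg_left (pow_le_pow_left₀ (norm_nonneg b) hb n) (norm_nonneg b)
      have hinv : (0:ℝ) ≤ (1-‖q‖)⁻¹ := inv_nonneg.mpr (one_sub_norm_pos hq).le
      calc ‖b‖^(n+1) * ((1-‖q‖)⁻¹)^(n+1) * ‖q‖^(n*(n+1))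
          ≤ (‖b‖ * ‖a‖^n) * ((1-‖q‖)⁻¹)^(n+1) * ‖q‖^(n*(n+1)) := by
            refine mul_le_mul_of_nonneg_right
              (mul_le_mul_of_nonneg_right h3 (pow_nonneg hinv _))
              (pow_nonneg (norm_nonneg q) _)
        _ = ‖b‖ * (‖a‖^n * ‖q‖^(n*(n+1)) * ((1-‖q‖)⁻¹)^(n+1)) := by ring
    have h4 := norm_eterm_le hq b (n+1)
    simp only [Nat.succ_sub_one] at h4
    exact h4.trans h2
  rw [hdiff]
  calc ‖∑' n, eterm q b (n+1)‖ ≤ ∑' n, ‖eterm q b (n+1)‖ := by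
        apply norm_tsum_le_tsum_norm
        apply Summable.of_nonneg_of_le (fun n => norm_nonneg _) hterm (hgs.mul_left ‖b‖)
    _ ≤ ∑' n, ‖b‖ * (‖a‖^n * ‖q‖^(n*(n+1)) * ((1-‖q‖)⁻¹)^(n+1)) := by
        apply Summable.tsum_le_tsum hterm
        · apply Summable.of_nonneg_of_le (fun n => norm_nonneg _) hterm (hgs.mul_left ‖b‖)
        · exact hgs.mul_left ‖b‖
    _ = ‖b‖ * ∑' n, (‖a‖^n * ‖q‖^(n*(n+1)) * ((1-‖q‖)⁻¹)^(n+1)) := tsum_mul_left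

lemma euler_lim2 (hq : ‖q‖ < 1) (a : ℂ) :
    Filter.Tendsto (fun N => ∑' n, eterm q (a*(q^2)^N) n) Filter.atTop (nhds 1) := by
  rw [← tendsto_sub_nhds_zero_iff]
  set D := ∑' n, (‖a‖^n * ‖q‖^(n*(n+1)) * ((1-‖q‖)⁻¹)^(n+1)) with hD
  have hQnorm : ‖q^2‖ < 1 := by
    rw [norm_pow]
    exact pow_lt_one₀ (norm_nonneg q) hq (by omega)
  have hbound : ∀ N : ℕ, ‖(∑' n, eterm q (a*(q^2)^N) n) - 1‖ ≤ (‖a‖ * ‖q^2‖^N) * D := by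
    intro N
    have hb : ‖a * (q^2)^N‖ ≤ ‖a‖ := by
      rw [norm_mul, norm_pow]
      calc ‖a‖ * ‖q^2‖^N ≤ ‖a‖ * 1 :=
            mul_le_mul_of_nonneg_left (pow_le_one₀ (norm_nonneg _) hQnorm.le) (norm_nonneg a)
        _ = ‖a‖ := mul_one _
    calc ‖(∑' n, eterm q (a*(q^2)^N) n) - 1‖ ≤ ‖a * (q^2)^N‖ * D := euler_tail hq a _ hb
      _ = (‖a‖ * ‖q^2‖^N) * D := by rw [norm_mul, norm_pow]
  have hlim : Filter.Tendsto (fun N : ℕ => (‖a‖ * ‖q^2‖^N) * D) Filter.atTop (nhds 0) := by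
    have h0 : Filter.Tendsto (fun N : ℕ => ‖a‖ * ‖q^2‖^N) Filter.atTop (nhds 0) := by
      have := (tendsto_pow_atTop_nhds_zero_of_lt_one (norm_nonneg _) hQnorm).const_mul ‖a‖
      simpa using this
    have := h0.mul_const D
    simpa using this
  exact squeeze_zero_norm hbound hlim

lemma euler_lim1 (hq : ‖q‖ < 1) (a : ℂ) :
    Filter.Tendsto (fun N => qp a (q^2) N) Filter.atTop (nhds (qpInf a (q^2))) := by
  by_cases hz : ∃ i, (1:ℂ) - a*(q^2)^i = 0
  · obtain ⟨i₀, hi⟩ := hz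
    have h0 : HasProd (fun i => (1:ℂ) - a*(q^2)^i) 0 := by
      rw [HasProd]
      refine Filter.Tendsto.congr' ?_ tendsto_const_nhds
      filter_upwards [Filter.eventually_ge_atTop ({i₀} : Finset ℕ)] with s hs
      exact (Finset.prod_eq_zero (hs (Finset.mem_singleton_self i₀)) hi).symm
    have heq : qpInf a (q^2) = 0 := h0.tprod_eq
    rw [heq]
    exact h0.tendsto_prod_nat
  · push_neg at hz
    have hQnorm : ‖q^2‖ < 1 := by
      rw [norm_pow]
      exact pow_lt_one₀ (norm_nonneg q) hq (by omega)
    have htend0 : Filter.Tendsto (fun n : ℕ => ‖a‖ * ‖q^2‖^n) Filter.atTop (nhds 0) := by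
      have := (tendsto_pow_atTop_nhds_zero_of_lt_one (norm_nonneg _) hQnorm).const_mul ‖a‖
      simpa using this
    obtain ⟨N, hN⟩ := Filter.eventually_atTop.mp
      (htend0.eventually_le_const (by norm_num : (0:ℝ) < 2⁻¹))
    have hlog : Summable (fun i => Complex.log ((1:ℂ) - a*(q^2)^i)) := by
      rw [← summable_nat_add_iff N]
      apply Summable.of_norm_bounded (g := fun i => (3/2 : ℝ) * (2⁻¹ * ‖q^2‖^i))
        (((summable_geometric_of_lt_one (norm_nonneg _) hQnorm).mul_left _).mul_left _)
      intro i
      have hnormz : ‖-(a*(q^2)^(i+N))‖ ≤ 2⁻¹ * ‖q^2‖^i := by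
        rw [norm_neg, norm_mul, norm_pow, pow_add]
        calc ‖a‖ * (‖q^2‖^i * ‖q^2‖^N) = (‖a‖ * ‖q^2‖^N) * ‖q^2‖^i := by ring
          _ ≤ 2⁻¹ * ‖q^2‖^i := mul_le_mul_of_nonneg_right (hN N le_rfl) (by positivity)
      have hhalf : ‖-(a*(q^2)^(i+N))‖ ≤ 1/2 := by
        calc ‖-(a*(q^2)^(i+N))‖ ≤ 2⁻¹ * ‖q^2‖^i := hnormz
          _ ≤ 2⁻¹ * 1 := mul_le_mul_of_nonneg_left
              (pow_le_one₀ (norm_nonneg _) hQnorm.le) (by norm_num)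
          _ = 1/2 := by norm_num
      have hlb := Complex.norm_log_one_add_half_le_self hhalf
      rw [show (1:ℂ) + -(a*(q^2)^(i+N)) = 1 - a*(q^2)^(i+N) from by ring] at hlb
      calc ‖Complex.log (1 - a*(q^2)^(i+N))‖ ≤ 3/2 * ‖-(a*(q^2)^(i+N))‖ := hlb
        _ ≤ 3/2 * (2⁻¹ * ‖q^2‖^i) := mul_le_mul_of_nonneg_left hnormz (by norm_num)
    have hmult : Multipliable (fun i => (1:ℂ) - a*(q^2)^i) :=
      Complex.multipliable_of_summable_log hlog
    exact hmult.hasProd.tendsto_prod_nat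

end Euler

lemma euler (hq : ‖q‖ < 1) (a : ℂ) : ∑' n, eterm q a n = qpInf a (q^2) := by
  have h := (euler_lim1 hq a).mul (euler_lim2 hq a)
  rw [mul_one] at h
  have h2 : (fun N => qp a (q^2) N * ∑' n, eterm q (a*(q^2)^N) n)
      = fun _ => ∑' n, eterm q a n := funext fun N => (euler_iter hq a N).symm
  rw [h2] at h
  exact tendsto_nhds_unique tendsto_const_nhds h

lemma qpInf_split (hq : ‖q‖ < 1) (p : ℕ) :
    qpInf q (q^2) = qp q (q^2) p * qpInf (q * (q^2)^p) (q^2) := by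
  rw [← euler hq q, ← euler hq (q * (q^2)^p)]
  exact euler_iter hq q p
section Summability

variable {q x : ℂ}

lemma x_factor_le (x q : ℂ) (i : ℕ) (hq : ‖q‖ < 1) : ‖x * (q^2)^i‖ ≤ ‖x‖ := by
  rw [norm_mul, norm_pow, norm_pow]
  calc ‖x‖ * (‖q‖^2)^i ≤ ‖x‖ * 1 := by
        refine mul_le_mul_of_nonneg_left (pow_le_one₀ (by positivity)
          (pow_le_one₀ (norm_nonneg q) hq.le)) (norm_nonneg x)
    _ = ‖x‖ := mul_one _

lemma q_factor_le' (q : ℂ) (i : ℕ) (hq : ‖q‖ < 1) : ‖q * (q^2)^i‖ ≤ ‖q‖ := by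
  rw [norm_mul, norm_pow, norm_pow]
  calc ‖q‖ * (‖q‖^2)^i ≤ ‖q‖ * 1 := by
        refine mul_le_mul_of_nonneg_left (pow_le_one₀ (by positivity)
          (pow_le_one₀ (norm_nonneg q) hq.le)) (norm_nonneg q)
    _ = ‖q‖ := mul_one _

lemma norm_Ff_le (hq : ‖q‖ < 1) (x : ℂ) (j k l : ℕ) :
    ‖Ff q x j k l‖ ≤ ((1+‖x‖) * (1-‖q‖)⁻¹)^(j+k+l)
      * ‖q‖^((j+k+l)*((j+k+l)-1)) := by
  have hxnn : (0:ℝ) ≤ 1 + ‖x‖ := by positivity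
  have hrpos := one_sub_norm_pos hq
  rw [Ff, norm_div]
  have hnum : ‖qp x (q^2) k * x^(j+l) * (-1:ℂ)^(j+k) * q^((j+k+l)^2+l^2+l)‖
      ≤ (1+‖x‖)^(j+k+l) * ‖q‖^((j+k+l)*((j+k+l)-1)) := by
    rw [norm_mul, norm_mul, norm_mul, norm_pow, norm_pow, norm_pow]
    have hm1 : ‖(-1:ℂ)‖ = 1 := by simp
    rw [hm1, one_pow, mul_one]
    have h1 : ‖qp x (q^2) k‖ ≤ (1+‖x‖)^k := norm_qp_le (fun i => x_factor_le x q i hq) k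
    have h2 : ‖x‖^(j+l) ≤ (1+‖x‖)^(j+l) :=
      pow_le_pow_left₀ (norm_nonneg x) (by linarith [norm_nonneg x]) _
    have h3 : ‖q‖^((j+k+l)^2+l^2+l) ≤ ‖q‖^((j+k+l)*((j+k+l)-1)) := by
      apply pow_le_pow_of_le_one (norm_nonneg q) hq.le
      calc (j+k+l)*((j+k+l)-1) ≤ (j+k+l)*(j+k+l) := Nat.mul_le_mul le_rfl (by omega)
        _ = (j+k+l)^2 := (sq (j+k+l)).symm
        _ ≤ (j+k+l)^2 + l^2 + l := by omega
    calc ‖qp x (q^2) k‖ * ‖x‖^(j+l) * ‖q‖^((j+k+l)^2+l^2+l)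
        ≤ (1+‖x‖)^k * (1+‖x‖)^(j+l) * ‖q‖^((j+k+l)*((j+k+l)-1)) := by
          refine mul_le_mul (mul_le_mul h1 h2 (by positivity) (by positivity)) h3
            (by positivity) (by positivity)
      _ = (1+‖x‖)^(j+k+l) * ‖q‖^((j+k+l)*((j+k+l)-1)) := by
          rw [← pow_add, show k + (j+l) = j+k+l from by omega]
  have hden : (1-‖q‖)^(j+k+l) ≤ ‖qp q q j * qp (q^2) (q^2) k * qp (q^2) (q^2) l‖ := by
    rw [norm_mul, norm_mul]
    calc (1-‖q‖)^(j+k+l) = (1-‖q‖)^j * (1-‖q‖)^k * (1-‖q‖)^l := by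
          rw [← pow_add, ← pow_add]
      _ ≤ ‖qp q q j‖ * ‖qp (q^2) (q^2) k‖ * ‖qp (q^2) (q^2) l‖ := by
          refine mul_le_mul (mul_le_mul (le_norm_qp hq (qq_factor_le hq) j)
            (le_norm_qp hq (QQ_factor_le hq) k) (by positivity) (norm_nonneg _))
            (le_norm_qp hq (QQ_factor_le hq) l) (by positivity)
            (by positivity)
  have hdenpos : (0:ℝ) < (1-‖q‖)^(j+k+l) := pow_pos hrpos _
  calc ‖qp x (q^2) k * x^(j+l) * (-1:ℂ)^(j+k) * q^((j+k+l)^2+l^2+l)‖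
        / ‖qp q q j * qp (q^2) (q^2) k * qp (q^2) (q^2) l‖
      ≤ ((1+‖x‖)^(j+k+l) * ‖q‖^((j+k+l)*((j+k+l)-1))) / (1-‖q‖)^(j+k+l) :=
        div_le_div₀ (by positivity) hnum hdenpos hden
    _ = ((1+‖x‖) * (1-‖q‖)⁻¹)^(j+k+l) * ‖q‖^((j+k+l)*((j+k+l)-1)) := by
        rw [div_eq_mul_inv, ← inv_pow, mul_pow]
        ring

lemma norm_Hf_le (hq : ‖q‖ < 1) (x : ℂ) (l r s : ℕ) :
    ‖Hf q x l r s‖ ≤ ((1+‖x‖) * (1-‖q‖)⁻¹)^(l+r+s)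
      * ‖q‖^((l+r+s)*((l+r+s)-1)) := by
  have hrpos := one_sub_norm_pos hq
  have hinv : (0:ℝ) ≤ (1-‖q‖)⁻¹ := inv_nonneg.mpr hrpos.le
  rw [Hf]
  rw [norm_mul, norm_mul, norm_mul, norm_mul, norm_pow, norm_pow, norm_pow]
  have hm1 : ‖(-1:ℂ)‖ = 1 := by simp
  rw [hm1, one_pow, one_mul]
  have h2 : ‖x‖^(l+r) ≤ (1+‖x‖)^(l+r+s) := by
    calc ‖x‖^(l+r) ≤ (1+‖x‖)^(l+r) :=
          pow_le_pow_left₀ (norm_nonneg x) (by linarith [norm_nonneg x]) _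
      _ ≤ (1+‖x‖)^(l+r+s) :=
          pow_le_pow_right₀ (by linarith [norm_nonneg x]) (by omega)
  have h3 : ‖q‖^(2*l^2 + l + r + (r+s)^2 + 2*(r+s)*l) ≤ ‖q‖^((l+r+s)*((l+r+s)-1)) := by
    apply pow_le_pow_of_le_one (norm_nonneg q) hq.le
    calc (l+r+s)*((l+r+s)-1) ≤ (l+r+s)*(l+r+s) := Nat.mul_le_mul le_rfl (by omega)
      _ = (l+r+s)^2 := (sq (l+r+s)).symm
      _ ≤ 2*l^2 + l + r + (r+s)^2 + 2*(r+s)*l := by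
          have : 2*l^2 + l + r + (r+s)^2 + 2*(r+s)*l = (l+r+s)^2 + (l^2 + l + r) := by ring
          omega
  have h4 : ‖wB q l * wB q r‖ * ‖wB q s‖ ≤ ((1-‖q‖)⁻¹)^(l+r+s) := by
    rw [norm_mul]
    calc ‖wB q l‖ * ‖wB q r‖ * ‖wB q s‖
        ≤ ((1-‖q‖)⁻¹)^l * ((1-‖q‖)⁻¹)^r * ((1-‖q‖)⁻¹)^s := by
          refine mul_le_mul (mul_le_mul (norm_wB_le hq l) (norm_wB_le hq r)
            (norm_nonneg _) (by positivity)) (norm_wB_le hq s) (norm_nonneg _)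
            (by positivity)
      _ = ((1-‖q‖)⁻¹)^(l+r+s) := by rw [← pow_add, ← pow_add]
  calc ‖x‖^(l+r) * ‖q‖^(2*l^2 + l + r + (r+s)^2 + 2*(r+s)*l) * (‖wB q l * wB q r‖ * ‖wB q s‖)
      ≤ (1+‖x‖)^(l+r+s) * ‖q‖^((l+r+s)*((l+r+s)-1)) * ((1-‖q‖)⁻¹)^(l+r+s) := by
        refine mul_le_mul (mul_le_mul h2 h3 (by positivity) (by positivity)) h4
          (by positivity) (by positivity)
    _ = ((1+‖x‖) * (1-‖q‖)⁻¹)^(l+r+s) * ‖q‖^((l+r+s)*((l+r+s)-1)) := by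
        rw [mul_pow]
        ring

lemma norm_Kf_le (hq : ‖q‖ < 1) (x : ℂ) (p s : ℕ) :
    ‖Kf q x p s‖ ≤ ((1+‖x‖) * 2 * (1-‖q‖)⁻¹)^(p+s)
      * ‖q‖^((p+s)*((p+s)-1)) := by
  have hrpos := one_sub_norm_pos hq
  have hinv : (0:ℝ) ≤ (1-‖q‖)⁻¹ := inv_nonneg.mpr hrpos.le
  rw [Kf]
  rw [norm_mul, norm_mul, norm_mul, norm_mul, norm_pow, norm_pow, norm_pow]
  have hm1 : ‖(-1:ℂ)‖ = 1 := by simp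
  rw [hm1, one_pow, one_mul]
  have h2 : ‖x‖^p ≤ (1+‖x‖)^(p+s) := by
    calc ‖x‖^p ≤ (1+‖x‖)^p :=
          pow_le_pow_left₀ (norm_nonneg x) (by linarith [norm_nonneg x]) _
      _ ≤ (1+‖x‖)^(p+s) :=
          pow_le_pow_right₀ (by linarith [norm_nonneg x]) (by omega)
  have hqp : ‖qp q (q^2) p‖ ≤ 2^(p+s) := by
    calc ‖qp q (q^2) p‖ ≤ (1+‖q‖)^p := norm_qp_le (fun i => q_factor_le' q i hq) p
      _ ≤ 2^p := pow_le_pow_left₀ (by positivity) (by linarith) p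
      _ ≤ 2^(p+s) := pow_le_pow_right₀ (by norm_num) (by omega)
  have h3 : ‖q‖^(p^2 + p + 2*s*p + s^2) ≤ ‖q‖^((p+s)*((p+s)-1)) := by
    apply pow_le_pow_of_le_one (norm_nonneg q) hq.le
    calc (p+s)*((p+s)-1) ≤ (p+s)*(p+s) := Nat.mul_le_mul le_rfl (by omega)
      _ = (p+s)^2 := (sq (p+s)).symm
      _ ≤ p^2 + p + 2*s*p + s^2 := by
          have : p^2 + p + 2*s*p + s^2 = (p+s)^2 + p := by ring
          omega
  have h4 : ‖wB q p * wB q s‖ ≤ ((1-‖q‖)⁻¹)^(p+s) := by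
    rw [norm_mul]
    calc ‖wB q p‖ * ‖wB q s‖ ≤ ((1-‖q‖)⁻¹)^p * ((1-‖q‖)⁻¹)^s :=
          mul_le_mul (norm_wB_le hq p) (norm_wB_le hq s) (norm_nonneg _) (by positivity)
      _ = ((1-‖q‖)⁻¹)^(p+s) := by rw [← pow_add]
  calc ‖x‖^p * ‖qp q (q^2) p‖ * ‖q‖^(p^2 + p + 2*s*p + s^2) * ‖wB q p * wB q s‖
      ≤ (1+‖x‖)^(p+s) * 2^(p+s) * ‖q‖^((p+s)*((p+s)-1)) * ((1-‖q‖)⁻¹)^(p+s) := by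
        refine mul_le_mul (mul_le_mul (mul_le_mul h2 hqp (norm_nonneg _) (by positivity))
          h3 (by positivity) (by positivity)) h4 (norm_nonneg _) (by positivity)
    _ = ((1+‖x‖) * 2 * (1-‖q‖)⁻¹)^(p+s) * ‖q‖^((p+s)*((p+s)-1)) := by
        rw [mul_pow, mul_pow]
        ring

lemma summable_Ff (hq : ‖q‖ < 1) (x : ℂ) :
    Summable (fun w : ℕ×ℕ×ℕ => Ff q x w.1 w.2.1 w.2.2) := by
  have hB : (0:ℝ) ≤ (1+‖x‖) * (1-‖q‖)⁻¹ :=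
    mul_nonneg (by positivity) (inv_nonneg.mpr (one_sub_norm_pos hq).le)
  obtain ⟨C, hC, hdec⟩ := decay hB (norm_nonneg q) hq
  apply summable_of_bound3 (C := C)
  rintro ⟨j, k, l⟩
  exact (norm_Ff_le hq x j k l).trans (hdec (j+k+l) _ le_rfl)

lemma summable_Hf (hq : ‖q‖ < 1) (x : ℂ) :
    Summable (fun w : ℕ×ℕ×ℕ => Hf q x w.1 w.2.1 w.2.2) := by
  have hB : (0:ℝ) ≤ (1+‖x‖) * (1-‖q‖)⁻¹ :=
    mul_nonneg (by positivity) (inv_nonneg.mpr (one_sub_norm_pos hq).le)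
  obtain ⟨C, hC, hdec⟩ := decay hB (norm_nonneg q) hq
  apply summable_of_bound3 (C := C)
  rintro ⟨l, r, s⟩
  exact (norm_Hf_le hq x l r s).trans (hdec (l+r+s) _ le_rfl)

lemma summable_Kf (hq : ‖q‖ < 1) (x : ℂ) :
    Summable (fun w : ℕ×ℕ => Kf q x w.1 w.2) := by
  have hB : (0:ℝ) ≤ (1+‖x‖) * 2 * (1-‖q‖)⁻¹ :=
    mul_nonneg (by positivity) (inv_nonneg.mpr (one_sub_norm_pos hq).le)
  obtain ⟨C, hC, hdec⟩ := decay hB (norm_nonneg q) hq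
  apply summable_of_bound2 (C := C)
  rintro ⟨p, s⟩
  exact (norm_Kf_le hq x p s).trans (hdec (p+s) _ le_rfl)

end Summability
section Main

variable {q x : ℂ}

def rot3 : (ℕ×ℕ×ℕ) ≃ (ℕ×ℕ×ℕ) where
  toFun w := (w.2.1, w.2.2, w.1)
  invFun w := (w.2.2, w.1, w.2.1)
  left_inv := by rintro ⟨a, b, c⟩; rfl
  right_inv := by rintro ⟨a, b, c⟩; rfl

lemma stepFH (hq : ‖q‖ < 1) (x : ℂ) :
    ∑' w : ℕ×ℕ×ℕ, Ff q x w.1 w.2.1 w.2.2 = ∑' w : ℕ×ℕ×ℕ, Hf q x w.1 w.2.1 w.2.2 := by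
  have sF := summable_Ff hq x
  have sH := summable_Hf hq x
  have sFr : Summable (fun w : ℕ×ℕ×ℕ => Ff q x w.2.1 w.2.2 w.1) :=
    (rot3.summable_iff (f := fun w : ℕ×ℕ×ℕ => Ff q x w.1 w.2.1 w.2.2)).mpr sF
  calc ∑' w : ℕ×ℕ×ℕ, Ff q x w.1 w.2.1 w.2.2
      = ∑' w : ℕ×ℕ×ℕ, Ff q x w.2.1 w.2.2 w.1 :=
        (rot3.tsum_eq (fun w : ℕ×ℕ×ℕ => Ff q x w.1 w.2.1 w.2.2)).symm
    _ = ∑' l, ∑' jk : ℕ×ℕ, Ff q x jk.1 jk.2 l := Summable.tsum_prod sFr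
    _ = ∑' l, ∑' m, ∑ p ∈ Finset.HasAntidiagonal.antidiagonal m, Ff q x p.1 p.2 l :=
        tsum_congr fun l => tsum_antidiagonal (sFr.prod_factor l)
    _ = ∑' l, ∑' m, ∑ p ∈ Finset.HasAntidiagonal.antidiagonal m, Hf q x l p.1 p.2 :=
        tsum_congr fun l => tsum_congr fun m => sumF_eq_sumH hq x l m
    _ = ∑' l, ∑' rs : ℕ×ℕ, Hf q x l rs.1 rs.2 :=
        tsum_congr fun l => (tsum_antidiagonal (sH.prod_factor l)).symm
    _ = ∑' w : ℕ×ℕ×ℕ, Hf q x w.1 w.2.1 w.2.2 := (Summable.tsum_prod sH).symm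

lemma stepHK (hq : ‖q‖ < 1) (x : ℂ) :
    ∑' w : ℕ×ℕ×ℕ, Hf q x w.1 w.2.1 w.2.2 = ∑' p, ∑' s, Kf q x p s := by
  have sH := summable_Hf hq x
  have sK := summable_Kf hq x
  have sHr : Summable (fun w : ℕ×ℕ×ℕ => Hf q x w.2.1 w.2.2 w.1) :=
    (rot3.summable_iff (f := fun w : ℕ×ℕ×ℕ => Hf q x w.1 w.2.1 w.2.2)).mpr sH
  have sKsw : Summable (fun w : ℕ×ℕ => Kf q x w.2 w.1) :=
    ((Equiv.prodComm ℕ ℕ).summable_iff (f := fun w : ℕ×ℕ => Kf q x w.1 w.2)).mpr sK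
  calc ∑' w : ℕ×ℕ×ℕ, Hf q x w.1 w.2.1 w.2.2
      = ∑' w : ℕ×ℕ×ℕ, Hf q x w.2.1 w.2.2 w.1 :=
        (rot3.tsum_eq (fun w : ℕ×ℕ×ℕ => Hf q x w.1 w.2.1 w.2.2)).symm
    _ = ∑' s, ∑' lr : ℕ×ℕ, Hf q x lr.1 lr.2 s := Summable.tsum_prod sHr
    _ = ∑' s, ∑' p, ∑ u ∈ Finset.HasAntidiagonal.antidiagonal p, Hf q x u.1 u.2 s :=
        tsum_congr fun s => tsum_antidiagonal (sHr.prod_factor s)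
    _ = ∑' s, ∑' p, Kf q x p s :=
        tsum_congr fun s => tsum_congr fun p => sumH_eq_K hq x s p
    _ = ∑' w : ℕ×ℕ, Kf q x w.2 w.1 := (Summable.tsum_prod sKsw).symm
    _ = ∑' w : ℕ×ℕ, Kf q x w.1 w.2 :=
        (Equiv.prodComm ℕ ℕ).tsum_eq (fun w : ℕ×ℕ => Kf q x w.1 w.2)
    _ = ∑' p, ∑' s, Kf q x p s := Summable.tsum_prod sK

lemma innerK_sum (hq : ‖q‖ < 1) (x : ℂ) (p : ℕ) :
    ∑' s, Kf q x p s = qpInf q (q^2) * eterm q (q^2*x) p := by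
  have hexp : ∀ s : ℕ, (q * (q^2)^p)^s * q^(s*(s-1)) = q^(2*s*p + s^2) := by
    intro s
    cases s with
    | zero => simp
    | succ t =>
      simp only [Nat.succ_sub_one]
      rw [mul_pow, ← pow_mul, ← pow_mul, mul_assoc, ← pow_add, ← pow_add]
      congr 1
      ring
  have hKs : ∀ s, Kf q x p s
      = ((-1)^p * x^p * qp q (q^2) p * q^(p^2+p) * wB q p) * eterm q (q*(q^2)^p) s := by
    intro s
    rw [Kf, eterm, pow_add (-1:ℂ) p s,
      show p^2+p+2*s*p+s^2 = (p^2+p) + (2*s*p+s^2) from by ring,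
      pow_add q, ← hexp s]
    ring
  have heterm : eterm q (q^2*x) p = (-1)^p * x^p * q^(p^2+p) * wB q p := by
    have hexp2 : (q^2)^p * q^(p*(p-1)) = q^(p^2+p) := by
      cases p with
      | zero => simp
      | succ t =>
        simp only [Nat.succ_sub_one]
        rw [← pow_mul, ← pow_add]
        congr 1
        ring
    rw [eterm, mul_pow, ← hexp2]
    ring
  calc ∑' s, Kf q x p s
      = ∑' s, ((-1)^p * x^p * qp q (q^2) p * q^(p^2+p) * wB q p) * eterm q (q*(q^2)^p) s :=
        tsum_congr hKs
    _ = ((-1)^p * x^p * qp q (q^2) p * q^(p^2+p) * wB q p) * ∑' s, eterm q (q*(q^2)^p) s :=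
        tsum_mul_left
    _ = ((-1)^p * x^p * qp q (q^2) p * q^(p^2+p) * wB q p) * qpInf (q*(q^2)^p) (q^2) := by
        rw [euler hq]
    _ = qpInf q (q^2) * eterm q (q^2*x) p := by
        rw [qpInf_split hq p, heterm]
        ring

theorem stmt13 (q x : ℂ) (hq : ‖q‖ < 1) :
    (∑' j : ℕ, ∑' k : ℕ, ∑' l : ℕ,
      qp x (q^2) k * x ^ (j + l) * (-1) ^ (j + k)
        * q ^ (((j:ℤ)+(k:ℤ)+(l:ℤ)) * ((j:ℤ)+(k:ℤ)+(l:ℤ)-1) + (l:ℤ)^2 + (j:ℤ) + (k:ℤ) + 2*(l:ℤ))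
        / (qp q q j * qp (q^2) (q^2) k * qp (q^2) (q^2) l))
    = qpInf q (q^2) * qpInf (q^2 * x) (q^2) := by
  have sF := summable_Ff hq x
  have h0 : (∑' j : ℕ, ∑' k : ℕ, ∑' l : ℕ,
      qp x (q^2) k * x ^ (j + l) * (-1) ^ (j + k)
        * q ^ (((j:ℤ)+(k:ℤ)+(l:ℤ)) * ((j:ℤ)+(k:ℤ)+(l:ℤ)-1) + (l:ℤ)^2 + (j:ℤ) + (k:ℤ) + 2*(l:ℤ))
        / (qp q q j * qp (q^2) (q^2) k * qp (q^2) (q^2) l))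
      = ∑' j, ∑' k, ∑' l, Ff q x j k l := by
    refine tsum_congr fun j => tsum_congr fun k => tsum_congr fun l => ?_
    have hz : (q : ℂ) ^ (((j:ℤ)+(k:ℤ)+(l:ℤ)) * ((j:ℤ)+(k:ℤ)+(l:ℤ)-1)
          + (l:ℤ)^2 + (j:ℤ) + (k:ℤ) + 2*(l:ℤ))
        = q ^ ((j+k+l)^2 + l^2 + l) := by
      rw [show (((j:ℤ)+(k:ℤ)+(l:ℤ)) * ((j:ℤ)+(k:ℤ)+(l:ℤ)-1)
          + (l:ℤ)^2 + (j:ℤ) + (k:ℤ) + 2*(l:ℤ)) = (((j+k+l)^2 + l^2 + l : ℕ) : ℤ) from by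
        push_cast; ring, zpow_natCast]
    rw [Ff, hz]
  have h1 : ∑' (j : ℕ), ∑' (k : ℕ), ∑' (l : ℕ), Ff q x j k l
      = ∑' w : ℕ×ℕ×ℕ, Ff q x w.1 w.2.1 w.2.2 := by
    rw [Summable.tsum_prod sF]
    exact (tsum_congr fun j => Summable.tsum_prod (sF.prod_factor j)).symm
  rw [h0, h1, stepFH hq x, stepHK hq x]
  calc ∑' p, ∑' s, Kf q x p s
      = ∑' p, (qpInf q (q^2) * eterm q (q^2*x) p) := tsum_congr (innerK_sum hq x)
    _ = qpInf q (q^2) * ∑' p, eterm q (q^2*x) p := tsum_mul_left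
    _ = qpInf q (q^2) * qpInf (q^2*x) (q^2) := by rw [euler hq]

end Main
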